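/- Let k be a field, V a k-vector space, σ : V ⊗ V → V ⊗ V a linear map satisfying the Yang–Baxter equation (σ ⊗ id)∘(id ⊗ σ)∘(σ ⊗ id) = (id ⊗ σ)∘(σ ⊗ id)∘(id ⊗ σ), and ε : V → k a linear map satisfying (ε ⊗ ε)∘σ = ε ⊗ ε (a braided character). For n ≥ 1 and 1 ≤ j ≤ n−1 write σ^j := id^{⊗(j−1)} ⊗ σ ⊗ id^{⊗(n−j−1)} : V^{⊗n} → V^{⊗n}. Define d_n : V^{⊗n} → V^{⊗(n−1)} by d_n := Σ_{i=1}^{n} (−1)^{i−1} (ε ⊗ id^{⊗(n−1)}) ∘ σ^1 ∘ σ^2 ∘ ⋯ ∘ σ^{i−1} (where σ^{i−1} is applied first and the i = 1 summand is ε ⊗ id^{⊗(n−1)}). Then d_{n−1} ∘ d_n = 0 for all n ≥ 2. -/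

import Mathlib

open TensorProduct

universe u

/-- The iterated tensor power `V^{⊗n}` (right-nested, with a copy of `k` at the end). -/
noncomputable def TP (k : Type u) [Field k] (V : Type u) [AddCommGroup V] [Module k V] :
    ℕ → ModuleCat k
  | 0 => ModuleCat.of k k
  | n + 1 => ModuleCat.of k (V ⊗[k] TP k V n)

variable (k : Type u) [Field k] (V : Type u) [AddCommGroup V] [Module k V]

/-- `σ` applied at the first two tensor factors of `V^{⊗(n+2)}`. -/
noncomputable def sig1 (σ : V ⊗[k] V →ₗ[k] V ⊗[k] V) (n : ℕ) :
    TP k V (n + 2) →ₗ[k] TP k V (n + 2) :=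
  (TensorProduct.assoc k V V (TP k V n)).toLinearMap
    ∘ₗ (σ.rTensor (TP k V n))
    ∘ₗ (TensorProduct.assoc k V V (TP k V n)).symm.toLinearMap

/-- `σ^j := id^{⊗(j-1)} ⊗ σ ⊗ id^{⊗(n-j-1)}`, the braiding applied at positions `j`, `j+1`
of `V^{⊗n}` (the identity when the position is out of range). -/
noncomputable def sigAt (σ : V ⊗[k] V →ₗ[k] V ⊗[k] V) :
    ℕ → (n : ℕ) → (TP k V n →ₗ[k] TP k V n)
  | _, 0 => LinearMap.id
  | _, 1 => LinearMap.id
  | 0, _ + 2 => LinearMap.id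
  | 1, n + 2 => sig1 k V σ n
  | j + 2, n + 2 => LinearMap.lTensor V (sigAt σ (j + 1) (n + 1))

/-- The composite `σ^1 ∘ σ^2 ∘ ⋯ ∘ σ^i` (with `σ^i` applied first; the identity for
`i = 0`). -/
noncomputable def sigPrefix (σ : V ⊗[k] V →ₗ[k] V ⊗[k] V) :
    ℕ → (n : ℕ) → (TP k V n →ₗ[k] TP k V n)
  | 0, _ => LinearMap.id
  | i + 1, n => sigPrefix σ i n ∘ₗ sigAt k V σ (i + 1) n

/-- `ε ⊗ id^{⊗(n-1)} : V^{⊗n} → V^{⊗(n-1)}`, evaluation of `ε` on the first factor. -/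
noncomputable def epsFirst (ε : V →ₗ[k] k) (n : ℕ) : TP k V (n + 1) →ₗ[k] TP k V n :=
  (TensorProduct.lid k (TP k V n)).toLinearMap ∘ₗ (ε.rTensor (TP k V n))

/-- The left braided differential with trivial coefficients:
`d_{n+1} = Σ_{i=0}^{n} (−1)^i (ε ⊗ id^{⊗ n}) ∘ σ^1 ∘ σ^2 ∘ ⋯ ∘ σ^i : V^{⊗(n+1)} → V^{⊗n}`. -/
noncomputable def brDiff (σ : V ⊗[k] V →ₗ[k] V ⊗[k] V) (ε : V →ₗ[k] k) (n : ℕ) :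
    TP k V (n + 1) →ₗ[k] TP k V n :=
  ∑ i ∈ Finset.range (n + 1),
    ((-1 : k) ^ i) • (epsFirst k V ε n ∘ₗ sigPrefix k V σ i (n + 1))

/-! ### Auxiliary generic lemmas (over an arbitrary module `W`) -/

/-- `σ` acting on the first two factors of `V ⊗ (V ⊗ W)`. -/
noncomputable def sW (σ : V ⊗[k] V →ₗ[k] V ⊗[k] V) (W : Type u) [AddCommGroup W] [Module k W] :
    V ⊗[k] (V ⊗[k] W) →ₗ[k] V ⊗[k] (V ⊗[k] W) :=
  (TensorProduct.assoc k V V W).toLinearMap ∘ₗ σ.rTensor W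
    ∘ₗ (TensorProduct.assoc k V V W).symm.toLinearMap

/-- The associator `(V ⊗ (V ⊗ V)) ⊗ W ≃ V ⊗ (V ⊗ (V ⊗ W))`. -/
noncomputable def psiE (W : Type u) [AddCommGroup W] [Module k W] :
    ((V ⊗[k] (V ⊗[k] V)) ⊗[k] W) ≃ₗ[k] (V ⊗[k] (V ⊗[k] (V ⊗[k] W))) :=
  (TensorProduct.assoc k V (V ⊗[k] V) W) ≪≫ₗ
    (LinearEquiv.lTensor V (TensorProduct.assoc k V V W))

variable {W : Type u} [AddCommGroup W] [Module k W] (σ : V ⊗[k] V →ₗ[k] V ⊗[k] V)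
  (ε : V →ₗ[k] k)

lemma psiE_coe : (psiE k V W).toLinearMap
    = LinearMap.lTensor V (TensorProduct.assoc k V V W).toLinearMap
      ∘ₗ (TensorProduct.assoc k V (V ⊗[k] V) W).toLinearMap := rfl

lemma psi_sW : sW k V σ (V ⊗[k] W) ∘ₗ (psiE k V W).toLinearMap
    = (psiE k V W).toLinearMap ∘ₗ LinearMap.rTensor W (sW k V σ V) := by
  rw [psiE_coe]
  apply TensorProduct.ext'
  intro t w
  simp only [LinearMap.coe_comp, Function.comp_apply]
  induction t using TensorProduct.induction_on with
  | zero => simp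
  | add x y hx hy => simp only [add_tmul, map_add, hx, hy]
  | tmul v t =>
    induction t using TensorProduct.induction_on with
    | zero => simp [tmul_zero]
    | add x y hx hy => simp only [tmul_add, add_tmul, map_add, hx, hy]
    | tmul b c =>
      simp only [sW, LinearMap.coe_comp, Function.comp_apply, LinearEquiv.coe_coe,
        assoc_tmul, LinearMap.lTensor_tmul, LinearMap.rTensor_tmul, assoc_symm_tmul]
      generalize σ (v ⊗ₜ[k] b) = y
      induction y using TensorProduct.induction_on with
      | zero => simp [tmul_zero, zero_tmul]
      | add x y hx hy => simp only [tmul_add, add_tmul, map_add, hx, hy]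
      | tmul p q => simp [assoc_tmul]

lemma psi_lsW : LinearMap.lTensor V (sW k V σ W) ∘ₗ (psiE k V W).toLinearMap
    = (psiE k V W).toLinearMap ∘ₗ LinearMap.rTensor W (LinearMap.lTensor V σ) := by
  rw [psiE_coe]
  apply TensorProduct.ext'
  intro t w
  simp only [LinearMap.coe_comp, Function.comp_apply]
  induction t using TensorProduct.induction_on with
  | zero => simp
  | add x y hx hy => simp only [add_tmul, map_add, hx, hy]
  | tmul v t =>
    induction t using TensorProduct.induction_on with
    | zero => simp [tmul_zero]
    | add x y hx hy => simp only [tmul_add, add_tmul, map_add, hx, hy]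
    | tmul b c =>
      simp only [sW, LinearMap.coe_comp, Function.comp_apply, LinearEquiv.coe_coe,
        assoc_tmul, LinearMap.lTensor_tmul, LinearMap.rTensor_tmul, assoc_symm_tmul]

lemma sW_eq_conj : sW k V σ (V ⊗[k] W)
    = (psiE k V W).conj (LinearMap.rTensor W (sW k V σ V)) := by
  rw [LinearEquiv.conj_apply, ← psi_sW k V σ, LinearMap.comp_assoc, LinearEquiv.comp_coe,
    LinearEquiv.symm_trans_self, LinearEquiv.refl_toLinearMap, LinearMap.comp_id]

lemma lsW_eq_conj : LinearMap.lTensor V (sW k V σ W)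
    = (psiE k V W).conj (LinearMap.rTensor W (LinearMap.lTensor V σ)) := by
  rw [LinearEquiv.conj_apply, ← psi_lsW k V σ, LinearMap.comp_assoc, LinearEquiv.comp_coe,
    LinearEquiv.symm_trans_self, LinearEquiv.refl_toLinearMap, LinearMap.comp_id]

/-- Transported Yang–Baxter relation. -/
lemma ybW
    (hYB : (TensorProduct.assoc k V V V).toLinearMap
        ∘ₗ (σ.rTensor V)
        ∘ₗ (TensorProduct.assoc k V V V).symm.toLinearMap
        ∘ₗ (σ.lTensor V)
        ∘ₗ (TensorProduct.assoc k V V V).toLinearMap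
        ∘ₗ (σ.rTensor V)
        ∘ₗ (TensorProduct.assoc k V V V).symm.toLinearMap
      = (σ.lTensor V)
        ∘ₗ (TensorProduct.assoc k V V V).toLinearMap
        ∘ₗ (σ.rTensor V)
        ∘ₗ (TensorProduct.assoc k V V V).symm.toLinearMap
        ∘ₗ (σ.lTensor V)) :
    sW k V σ (V ⊗[k] W) ∘ₗ LinearMap.lTensor V (sW k V σ W) ∘ₗ sW k V σ (V ⊗[k] W)
      = LinearMap.lTensor V (sW k V σ W) ∘ₗ sW k V σ (V ⊗[k] W)
          ∘ₗ LinearMap.lTensor V (sW k V σ W) := by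
  have hcore : sW k V σ V ∘ₗ LinearMap.lTensor V σ ∘ₗ sW k V σ V
      = LinearMap.lTensor V σ ∘ₗ sW k V σ V ∘ₗ LinearMap.lTensor V σ := by
    simp only [sW, LinearMap.comp_assoc] at hYB ⊢
    exact hYB
  rw [sW_eq_conj, lsW_eq_conj, ← LinearEquiv.conj_comp, ← LinearEquiv.conj_comp,
    ← LinearEquiv.conj_comp, ← LinearEquiv.conj_comp]
  refine congrArg _ ?_
  rw [← LinearMap.rTensor_comp, ← LinearMap.rTensor_comp,
    ← LinearMap.rTensor_comp, ← LinearMap.rTensor_comp]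
  exact congrArg _ hcore

/-- Far commutation: `σ` at position 1 commutes with maps acting beyond the first two
factors. -/
lemma sW_lTensor2 (h : W →ₗ[k] W) :
    sW k V σ W ∘ₗ LinearMap.lTensor V (LinearMap.lTensor V h)
      = LinearMap.lTensor V (LinearMap.lTensor V h) ∘ₗ sW k V σ W := by
  apply TensorProduct.ext'
  intro v t
  simp only [LinearMap.coe_comp, Function.comp_apply]
  induction t using TensorProduct.induction_on with
  | zero => simp [tmul_zero]
  | add x y hx hy => simp only [tmul_add, map_add, hx, hy]
  | tmul b x =>
    simp only [sW, LinearMap.coe_comp, Function.comp_apply, LinearEquiv.coe_coe,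
      assoc_tmul, LinearMap.lTensor_tmul, LinearMap.rTensor_tmul, assoc_symm_tmul]
    generalize σ (v ⊗ₜ[k] b) = y
    induction y using TensorProduct.induction_on with
    | zero => simp [tmul_zero, zero_tmul]
    | add x y hx hy => simp only [tmul_add, add_tmul, map_add, hx, hy]
    | tmul p q => simp [assoc_tmul]

/-- The braided-character relation transported to `V ⊗ (V ⊗ W)`. -/
lemma charW (hchar : (TensorProduct.map ε ε) ∘ₗ σ = TensorProduct.map ε ε) :
    (((TensorProduct.lid k W).toLinearMap ∘ₗ ε.rTensor W)
      ∘ₗ ((TensorProduct.lid k (V ⊗[k] W)).toLinearMap ∘ₗ ε.rTensor (V ⊗[k] W)))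
      ∘ₗ sW k V σ W
    = ((TensorProduct.lid k W).toLinearMap ∘ₗ ε.rTensor W)
      ∘ₗ ((TensorProduct.lid k (V ⊗[k] W)).toLinearMap ∘ₗ ε.rTensor (V ⊗[k] W)) := by
  have key : ∀ (y : V ⊗[k] V) (c : W),
      (((TensorProduct.lid k W).toLinearMap ∘ₗ ε.rTensor W)
        ∘ₗ ((TensorProduct.lid k (V ⊗[k] W)).toLinearMap ∘ₗ ε.rTensor (V ⊗[k] W)))
        ((TensorProduct.assoc k V V W) (y ⊗ₜ[k] c))
      = (TensorProduct.lid k k) (TensorProduct.map ε ε y) • c := by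
    intro y c
    induction y using TensorProduct.induction_on with
    | zero => simp only [zero_tmul, map_zero, zero_smul]
    | add x y hx hy => simp only [add_tmul, map_add, hx, hy, add_smul]
    | tmul p q => simp [mul_smul]
  apply TensorProduct.ext'
  intro v t
  induction t using TensorProduct.induction_on with
  | zero => simp [tmul_zero]
  | add x y hx hy => simp only [LinearMap.coe_comp, Function.comp_apply] at hx hy ⊢
                     simp only [tmul_add, map_add, hx, hy]
  | tmul b c =>
    have h1 : (sW k V σ W) (v ⊗ₜ[k] (b ⊗ₜ[k] c))
        = (TensorProduct.assoc k V V W) ((σ (v ⊗ₜ[k] b)) ⊗ₜ[k] c) := by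
      simp [sW, assoc_symm_tmul]
    have h2 : v ⊗ₜ[k] (b ⊗ₜ[k] c)
        = (TensorProduct.assoc k V V W) ((v ⊗ₜ[k] b) ⊗ₜ[k] c) := by simp
    rw [LinearMap.comp_apply, h1, key]
    conv_rhs => rw [h2, key]
    have hc := LinearMap.congr_fun hchar (v ⊗ₜ[k] b)
    simp only [LinearMap.comp_apply] at hc
    rw [hc]

/-- `(ε ⊗ id) ∘ (id ⊗ g) = g ∘ (ε ⊗ id)`. -/
lemma epsW (g : W →ₗ[k] W) :
    ((TensorProduct.lid k W).toLinearMap ∘ₗ ε.rTensor W) ∘ₗ LinearMap.lTensor V g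
      = g ∘ₗ ((TensorProduct.lid k W).toLinearMap ∘ₗ ε.rTensor W) := by
  apply TensorProduct.ext'
  intro v x
  simp

/-! ### Combinatorial layer on `TP` -/

lemma sigAt_zero' (j : ℕ) : sigAt k V σ j 0 = LinearMap.id := by
  match j with
  | 0 => rfl
  | 1 => rfl
  | j + 2 => rfl

lemma sigAt_one' (j : ℕ) : sigAt k V σ j 1 = LinearMap.id := by
  match j with
  | 0 => rfl
  | 1 => rfl
  | j + 2 => rfl

lemma sigAt_shift (a m : ℕ) :
    sigAt k V σ (a + 2) (m + 1) = LinearMap.lTensor V (sigAt k V σ (a + 1) m) := by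
  match m with
  | 0 => rw [sigAt_zero']; show LinearMap.id = _; rw [LinearMap.lTensor_id]; rfl
  | m + 1 => rfl

lemma epsFirst_lTensor (m : ℕ) (g : TP k V m →ₗ[k] TP k V m) :
    epsFirst k V ε m ∘ₗ LinearMap.lTensor V g = g ∘ₗ epsFirst k V ε m :=
  epsW k V ε g

/-- Far commutation of braid generators. -/
lemma sigAt_comm : ∀ (a b m : ℕ), a + 3 ≤ b →
    sigAt k V σ (a + 1) m ∘ₗ sigAt k V σ b m = sigAt k V σ b m ∘ₗ sigAt k V σ (a + 1) m := by
  intro a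
  induction a with
  | zero =>
    intro b m hb
    match m with
    | 0 => simp [sigAt_zero']
    | 1 => simp [sigAt_one']
    | m + 2 =>
      obtain ⟨b', rfl⟩ : ∃ b', b = b' + 3 := ⟨b - 3, by omega⟩
      rw [show sigAt k V σ (b' + 3) (m + 2)
          = LinearMap.lTensor V (LinearMap.lTensor V (sigAt k V σ (b' + 1) m)) by
        rw [sigAt_shift, sigAt_shift]; rfl]
      exact sW_lTensor2 k V σ (sigAt k V σ (b' + 1) m)
  | succ a ih =>
    intro b m hb
    match m with
    | 0 => simp [sigAt_zero']
    | 1 => simp [sigAt_one']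
    | m + 2 =>
      obtain ⟨c, rfl⟩ : ∃ c, b = c + 2 := ⟨b - 2, by omega⟩
      erw [show a + 1 + 1 = a + 2 from rfl, sigAt_shift, sigAt_shift,
        ← LinearMap.lTensor_comp, ← LinearMap.lTensor_comp, ih (c + 1) (m + 1) (by omega)]

/-- Yang–Baxter relation for adjacent braid generators. -/
lemma sigAt_yb
    (hYB : (TensorProduct.assoc k V V V).toLinearMap
        ∘ₗ (σ.rTensor V)
        ∘ₗ (TensorProduct.assoc k V V V).symm.toLinearMap
        ∘ₗ (σ.lTensor V)
        ∘ₗ (TensorProduct.assoc k V V V).toLinearMap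
        ∘ₗ (σ.rTensor V)
        ∘ₗ (TensorProduct.assoc k V V V).symm.toLinearMap
      = (σ.lTensor V)
        ∘ₗ (TensorProduct.assoc k V V V).toLinearMap
        ∘ₗ (σ.rTensor V)
        ∘ₗ (TensorProduct.assoc k V V V).symm.toLinearMap
        ∘ₗ (σ.lTensor V)) :
    ∀ (a m : ℕ), a + 3 ≤ m →
    sigAt k V σ (a + 1) m ∘ₗ sigAt k V σ (a + 2) m ∘ₗ sigAt k V σ (a + 1) m
      = sigAt k V σ (a + 2) m ∘ₗ sigAt k V σ (a + 1) m ∘ₗ sigAt k V σ (a + 2) m := by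
  intro a
  induction a with
  | zero =>
    intro m hm
    obtain ⟨n, rfl⟩ : ∃ n, m = n + 3 := ⟨m - 3, by omega⟩
    rw [show sigAt k V σ 2 (n + 3) = LinearMap.lTensor V (sigAt k V σ 1 (n + 2)) from rfl]
    exact ybW k V σ hYB
  | succ a ih =>
    intro m hm
    obtain ⟨m', rfl⟩ : ∃ m', m = m' + 1 := ⟨m - 1, by omega⟩
    erw [show a + 1 + 1 = a + 2 from rfl, show a + 1 + 2 = a + 3 from rfl,
      sigAt_shift, sigAt_shift, ← LinearMap.lTensor_comp, ← LinearMap.lTensor_comp,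
      ← LinearMap.lTensor_comp, ← LinearMap.lTensor_comp,
      ih m' (by omega)]

lemma sigPrefix_zero (m : ℕ) : sigPrefix k V σ 0 m = LinearMap.id := rfl

lemma sigPrefix_succ (i m : ℕ) :
    sigPrefix k V σ (i + 1) m = sigPrefix k V σ i m ∘ₗ sigAt k V σ (i + 1) m := rfl

lemma sigAt_sigPrefix_comm : ∀ (c b m : ℕ), c + 2 ≤ b →
    sigAt k V σ b m ∘ₗ sigPrefix k V σ c m = sigPrefix k V σ c m ∘ₗ sigAt k V σ b m := by
  intro c
  induction c with
  | zero => intro b m _; rw [sigPrefix_zero, LinearMap.comp_id, LinearMap.id_comp]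
  | succ c ih =>
    intro b m hb
    rw [sigPrefix_succ, ← LinearMap.comp_assoc, ih b m (by omega), LinearMap.comp_assoc,
      ← sigAt_comm k V σ c b m (by omega), ← LinearMap.comp_assoc]

lemma sigAt_succ_sigPrefix
    (hYB : (TensorProduct.assoc k V V V).toLinearMap
        ∘ₗ (σ.rTensor V)
        ∘ₗ (TensorProduct.assoc k V V V).symm.toLinearMap
        ∘ₗ (σ.lTensor V)
        ∘ₗ (TensorProduct.assoc k V V V).toLinearMap
        ∘ₗ (σ.rTensor V)
        ∘ₗ (TensorProduct.assoc k V V V).symm.toLinearMap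
      = (σ.lTensor V)
        ∘ₗ (TensorProduct.assoc k V V V).toLinearMap
        ∘ₗ (σ.rTensor V)
        ∘ₗ (TensorProduct.assoc k V V V).symm.toLinearMap
        ∘ₗ (σ.lTensor V)) :
    ∀ (a j m : ℕ), a + 2 ≤ j → j + 1 ≤ m →
    sigAt k V σ (a + 2) m ∘ₗ sigPrefix k V σ j m
      = sigPrefix k V σ j m ∘ₗ sigAt k V σ (a + 1) m := by
  intro a j m hj
  induction j, hj using Nat.le_induction with
  | base =>
    intro hm
    rw [sigPrefix_succ, sigPrefix_succ]
    simp only [LinearMap.comp_assoc]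
    rw [← LinearMap.comp_assoc]
    rw [sigAt_sigPrefix_comm k V σ a (a + 2) m le_rfl]
    rw [LinearMap.comp_assoc]
    rw [← sigAt_yb k V σ hYB a m (by omega)]
  | succ j hj ihj =>
    intro hm
    rw [sigPrefix_succ]
    simp only [LinearMap.comp_assoc]
    rw [← LinearMap.comp_assoc, ihj (by omega), LinearMap.comp_assoc,
      sigAt_comm k V σ a (j + 1) m (by omega)]

lemma lTensor_sigPrefix_exchange
    (hYB : (TensorProduct.assoc k V V V).toLinearMap
        ∘ₗ (σ.rTensor V)
        ∘ₗ (TensorProduct.assoc k V V V).symm.toLinearMap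
        ∘ₗ (σ.lTensor V)
        ∘ₗ (TensorProduct.assoc k V V V).toLinearMap
        ∘ₗ (σ.rTensor V)
        ∘ₗ (TensorProduct.assoc k V V V).symm.toLinearMap
      = (σ.lTensor V)
        ∘ₗ (TensorProduct.assoc k V V V).toLinearMap
        ∘ₗ (σ.rTensor V)
        ∘ₗ (TensorProduct.assoc k V V V).symm.toLinearMap
        ∘ₗ (σ.lTensor V)) :
    ∀ (i j m : ℕ), i + 1 ≤ j → j ≤ m →
    LinearMap.lTensor V (sigPrefix k V σ i m) ∘ₗ sigPrefix k V σ j (m + 1)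
      = sigPrefix k V σ j (m + 1) ∘ₗ sigPrefix k V σ i (m + 1) := by
  intro i
  induction i with
  | zero =>
    intro j m _ _
    erw [sigPrefix_zero, LinearMap.lTensor_id, LinearMap.id_comp]
  | succ i ih =>
    intro j m hij hjm
    erw [sigPrefix_succ, LinearMap.lTensor_comp, ← sigAt_shift k V σ i m,
      LinearMap.comp_assoc,
      sigAt_succ_sigPrefix k V σ hYB i j (m + 1) (by omega) (by omega),
      ← LinearMap.comp_assoc, ih j m (by omega) hjm, LinearMap.comp_assoc,
      ← sigPrefix_succ]

lemma sigPrefix_succ_eq : ∀ (j m : ℕ),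
    sigPrefix k V σ (j + 1) (m + 2)
      = sigAt k V σ 1 (m + 2) ∘ₗ LinearMap.lTensor V (sigPrefix k V σ j (m + 1)) := by
  intro j
  induction j with
  | zero =>
    intro m
    erw [sigPrefix_succ, sigPrefix_zero, LinearMap.id_comp, sigPrefix_zero,
      LinearMap.lTensor_id, LinearMap.comp_id]
  | succ j ih =>
    intro m
    erw [sigPrefix_succ, ih m, LinearMap.comp_assoc,
      show sigAt k V σ (j + 1 + 1) (m + 2)
          = LinearMap.lTensor V (sigAt k V σ (j + 1) (m + 1)) from
        sigAt_shift k V σ j (m + 1),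
      ← LinearMap.lTensor_comp, ← sigPrefix_succ]; rfl

lemma epsFirst_epsFirst_sig1
    (hchar : (TensorProduct.map ε ε) ∘ₗ σ = TensorProduct.map ε ε) (m : ℕ) :
    (epsFirst k V ε m ∘ₗ epsFirst k V ε (m + 1)) ∘ₗ sigAt k V σ 1 (m + 2)
      = epsFirst k V ε m ∘ₗ epsFirst k V ε (m + 1) :=
  charW k V σ ε hchar

lemma key_exchange
    (hYB : (TensorProduct.assoc k V V V).toLinearMap
        ∘ₗ (σ.rTensor V)
        ∘ₗ (TensorProduct.assoc k V V V).symm.toLinearMap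
        ∘ₗ (σ.lTensor V)
        ∘ₗ (TensorProduct.assoc k V V V).toLinearMap
        ∘ₗ (σ.rTensor V)
        ∘ₗ (TensorProduct.assoc k V V V).symm.toLinearMap
      = (σ.lTensor V)
        ∘ₗ (TensorProduct.assoc k V V V).toLinearMap
        ∘ₗ (σ.rTensor V)
        ∘ₗ (TensorProduct.assoc k V V V).symm.toLinearMap
        ∘ₗ (σ.lTensor V))
    (hchar : (TensorProduct.map ε ε) ∘ₗ σ = TensorProduct.map ε ε)
    (m i j : ℕ) (hij : i ≤ j) (hjm : j ≤ m) :
    (epsFirst k V ε m ∘ₗ sigPrefix k V σ i (m + 1))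
      ∘ₗ (epsFirst k V ε (m + 1) ∘ₗ sigPrefix k V σ (j + 1) (m + 2))
    = (epsFirst k V ε m ∘ₗ sigPrefix k V σ j (m + 1))
      ∘ₗ (epsFirst k V ε (m + 1) ∘ₗ sigPrefix k V σ i (m + 2)) := by
  calc (epsFirst k V ε m ∘ₗ sigPrefix k V σ i (m + 1))
      ∘ₗ (epsFirst k V ε (m + 1) ∘ₗ sigPrefix k V σ (j + 1) (m + 2))
      = epsFirst k V ε m ∘ₗ ((sigPrefix k V σ i (m + 1) ∘ₗ epsFirst k V ε (m + 1))
          ∘ₗ sigPrefix k V σ (j + 1) (m + 2)) := by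
        simp only [LinearMap.comp_assoc]
    _ = epsFirst k V ε m ∘ₗ ((epsFirst k V ε (m + 1)
          ∘ₗ LinearMap.lTensor V (sigPrefix k V σ i (m + 1)))
          ∘ₗ sigPrefix k V σ (j + 1) (m + 2)) := by
        rw [← epsFirst_lTensor k V ε (m + 1) (sigPrefix k V σ i (m + 1))]; rfl
    _ = epsFirst k V ε m ∘ₗ (epsFirst k V ε (m + 1)
          ∘ₗ (LinearMap.lTensor V (sigPrefix k V σ i (m + 1))
            ∘ₗ sigPrefix k V σ (j + 1) (m + 2))) := by
        rfl
    _ = epsFirst k V ε m ∘ₗ (epsFirst k V ε (m + 1)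
          ∘ₗ (sigPrefix k V σ (j + 1) (m + 2) ∘ₗ sigPrefix k V σ i (m + 2))) := by
        erw [lTensor_sigPrefix_exchange k V σ hYB i (j + 1) (m + 1) (by omega) (by omega)]
    _ = epsFirst k V ε m ∘ₗ (epsFirst k V ε (m + 1)
          ∘ₗ ((sigAt k V σ 1 (m + 2) ∘ₗ LinearMap.lTensor V (sigPrefix k V σ j (m + 1)))
            ∘ₗ sigPrefix k V σ i (m + 2))) := by
        rw [sigPrefix_succ_eq k V σ j m]; rfl
    _ = ((epsFirst k V ε m ∘ₗ epsFirst k V ε (m + 1)) ∘ₗ sigAt k V σ 1 (m + 2))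
          ∘ₗ (LinearMap.lTensor V (sigPrefix k V σ j (m + 1))
            ∘ₗ sigPrefix k V σ i (m + 2)) := by
        rfl
    _ = (epsFirst k V ε m ∘ₗ epsFirst k V ε (m + 1))
          ∘ₗ (LinearMap.lTensor V (sigPrefix k V σ j (m + 1))
            ∘ₗ sigPrefix k V σ i (m + 2)) := by
        rw [epsFirst_epsFirst_sig1 k V σ ε hchar m]
    _ = epsFirst k V ε m ∘ₗ ((epsFirst k V ε (m + 1)
          ∘ₗ LinearMap.lTensor V (sigPrefix k V σ j (m + 1)))
            ∘ₗ sigPrefix k V σ i (m + 2)) := by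
        rfl
    _ = epsFirst k V ε m ∘ₗ ((sigPrefix k V σ j (m + 1) ∘ₗ epsFirst k V ε (m + 1))
            ∘ₗ sigPrefix k V σ i (m + 2)) := by
        rw [epsFirst_lTensor k V ε (m + 1) (sigPrefix k V σ j (m + 1))]; rfl
    _ = (epsFirst k V ε m ∘ₗ sigPrefix k V σ j (m + 1))
          ∘ₗ (epsFirst k V ε (m + 1) ∘ₗ sigPrefix k V σ i (m + 2)) := by
        simp only [LinearMap.comp_assoc]

lemma comp_sum_sum {A B C : ModuleCat k} (s t : Finset ℕ)
    (f : ℕ → (B →ₗ[k] C)) (g : ℕ → (A →ₗ[k] B)) :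
    (∑ i ∈ s, f i) ∘ₗ (∑ j ∈ t, g j) = ∑ i ∈ s, ∑ j ∈ t, (f i ∘ₗ g j) := by
  ext x
  simp [LinearMap.sum_apply, map_sum]

/-- If `σ` satisfies the Yang–Baxter equation and `ε` is a braided character
(`(ε ⊗ ε) ∘ σ = ε ⊗ ε`), then the braided differential squares to zero:
`d_{n-1} ∘ d_n = 0` for all `n ≥ 2`. -/
theorem brDiff_squared_zero (σ : V ⊗[k] V →ₗ[k] V ⊗[k] V) (ε : V →ₗ[k] k)
    (hYB : (TensorProduct.assoc k V V V).toLinearMap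
        ∘ₗ (σ.rTensor V)
        ∘ₗ (TensorProduct.assoc k V V V).symm.toLinearMap
        ∘ₗ (σ.lTensor V)
        ∘ₗ (TensorProduct.assoc k V V V).toLinearMap
        ∘ₗ (σ.rTensor V)
        ∘ₗ (TensorProduct.assoc k V V V).symm.toLinearMap
      = (σ.lTensor V)
        ∘ₗ (TensorProduct.assoc k V V V).toLinearMap
        ∘ₗ (σ.rTensor V)
        ∘ₗ (TensorProduct.assoc k V V V).symm.toLinearMap
        ∘ₗ (σ.lTensor V))
    (hchar : (TensorProduct.map ε ε) ∘ₗ σ = TensorProduct.map ε ε) :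
    ∀ n : ℕ, brDiff k V σ ε n ∘ₗ brDiff k V σ ε (n + 1) = 0 := by
  intro n
  set term : ℕ × ℕ → (TP k V (n + 2) →ₗ[k] TP k V n) := fun p =>
    ((-1 : k) ^ (p.1 + p.2)) •
      ((epsFirst k V ε n ∘ₗ sigPrefix k V σ p.1 (n + 1)) ∘ₗ
        (epsFirst k V ε (n + 1) ∘ₗ sigPrefix k V σ p.2 (n + 2))) with hterm
  have hsum : brDiff k V σ ε n ∘ₗ brDiff k V σ ε (n + 1)
      = ∑ p ∈ (Finset.range (n + 1)) ×ˢ (Finset.range (n + 2)), term p := by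
    unfold brDiff
    rw [comp_sum_sum]
    rw [Finset.sum_product]
    refine Finset.sum_congr rfl fun i _ => Finset.sum_congr rfl fun j _ => ?_
    rw [LinearMap.smul_comp, LinearMap.comp_smul, smul_smul, ← pow_add, hterm]
  rw [hsum, ← Finset.sum_filter_add_sum_filter_not
    ((Finset.range (n + 1)) ×ˢ (Finset.range (n + 2))) (fun p => p.2 ≤ p.1)]
  have hB : ∑ p ∈ ((Finset.range (n + 1)) ×ˢ (Finset.range (n + 2))).filter
        (fun p => ¬ p.2 ≤ p.1), term p
      = ∑ p ∈ ((Finset.range (n + 1)) ×ˢ (Finset.range (n + 2))).filter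
        (fun p => p.2 ≤ p.1), (- term p) := by
    refine Finset.sum_nbij' (fun p => (p.2 - 1, p.1)) (fun q => (q.2, q.1 + 1))
      ?_ ?_ ?_ ?_ ?_
    · intro p hp
      simp only [Finset.mem_filter, Finset.mem_product, Finset.mem_range] at hp
      beta_reduce
      simp only [Finset.mem_filter, Finset.mem_product, Finset.mem_range]
      omega
    · intro q hq
      simp only [Finset.mem_filter, Finset.mem_product, Finset.mem_range] at hq
      beta_reduce
      simp only [Finset.mem_filter, Finset.mem_product, Finset.mem_range]
      omega
    · intro p hp
      obtain ⟨p1, p2⟩ := p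
      simp only [Finset.mem_filter, Finset.mem_product, Finset.mem_range] at hp
      simp only [Prod.mk.injEq]
      refine ⟨trivial, by omega⟩
    · intro q hq
      obtain ⟨q1, q2⟩ := q
      simp only [Finset.mem_filter, Finset.mem_product, Finset.mem_range] at hq
      simp only [Prod.mk.injEq]
      exact ⟨by omega, trivial⟩
    · intro p hp
      obtain ⟨p1, p2⟩ := p
      simp only [Finset.mem_filter, Finset.mem_product, Finset.mem_range] at hp
      obtain ⟨⟨h1, h2⟩, h3⟩ := hp
      simp only [not_le] at h3
      obtain ⟨q, rfl⟩ : ∃ q, p2 = q + 1 := ⟨p2 - 1, by omega⟩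
      simp only [hterm]
      rw [Nat.add_sub_cancel]
      rw [key_exchange k V σ ε hYB hchar n p1 q (by omega) (by omega)]
      rw [show p1 + (q + 1) = (q + p1) + 1 from by omega, pow_succ, mul_comm,
        neg_one_mul, neg_smul]
  rw [hB, ← Finset.sum_add_distrib]
  simp
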